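/- arXiv:0802.0323 — 3 statements merged into one kernel-verified Lean document; each statement's English description precedes it below -/
import Mathlib

section
/- Let θ ∈ L²(-π,π), and suppose the function y(x) = (1/sin x)·∫₀ˣ θ(t) dt lies in L²(-π,π). Then ∫_{-π}^{0} θ(t) dt = 0 and ∫_{0}^{π} θ(t) dt = 0. -/
open Real MeasureTheory Set

private lemma key (θ : ℝ → ℝ)
    (hθ : MemLp θ 2 (volume.restrict (Ioo (-π) π)))
    (hy : MemLp (fun x => (Real.sin x)⁻¹ * ∫ t in (0:ℝ)..x, θ t) 2
      (volume.restrict (Ioo (-π) π))) :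
    (∫ t in (0:ℝ)..π, θ t) = 0 := by
  by_contra hc
  have hpi : (0:ℝ) < π := pi_pos
  have hfin : IsFiniteMeasure (volume.restrict (Ioo (-π) π)) :=
    ⟨by rw [Measure.restrict_apply_univ]; exact measure_Ioo_lt_top⟩
  have hθint : IntegrableOn θ (Ioo (-π) π) := hθ.integrable (by norm_num)
  have hyint : IntegrableOn (fun x => (Real.sin x)⁻¹ * ∫ t in (0:ℝ)..x, θ t)
      (Ioo (-π) π) := hy.integrable (by norm_num)
  set F : ℝ → ℝ := fun x => ∫ t in (0:ℝ)..x, θ t with hF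
  set c : ℝ := ∫ t in (0:ℝ)..π, θ t with hcdef
  have hII : IntervalIntegrable θ volume (-π) π := by
    rw [intervalIntegrable_iff_integrableOn_Ioo_of_le (by linarith)]
    exact hθint
  have hcont : ContinuousOn F (uIcc (-π) π) :=
    intervalIntegral.continuousOn_primitive_interval' hII
      (by rw [uIcc_of_le (by linarith)]; exact ⟨by linarith, by linarith⟩)
  have hmemπ : π ∈ uIcc (-π) π := by
    rw [uIcc_of_le (by linarith)]; exact ⟨by linarith, le_refl _⟩
  have htend : Filter.Tendsto F (nhdsWithin π (uIcc (-π) π)) (nhds c) :=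
    hcont π hmemπ
  have habs : Filter.Tendsto (fun x => |F x|) (nhdsWithin π (uIcc (-π) π))
      (nhds |c|) := htend.abs
  have hev : ∀ᶠ x in nhdsWithin π (uIcc (-π) π), |c| / 2 < |F x| :=
    habs.eventually_const_lt (by have := abs_pos.mpr hc; linarith)
  rw [eventually_nhdsWithin_iff, Metric.eventually_nhds_iff] at hev
  obtain ⟨ε, hε, hball⟩ := hev
  set δ : ℝ := min ε π with hδdef
  have hδpos : 0 < δ := lt_min hε hpi
  have hδle : δ ≤ π := min_le_right _ _
  -- pointwise bound on Ioo (π - δ) π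
  have hbound : ∀ x ∈ Ioo (π - δ) π,
      |(x - π)⁻¹| ≤ (2 / |c|) * |(Real.sin x)⁻¹ * F x| := by
    intro x hx
    have hx1 : π - δ < x := hx.1
    have hx2 : x < π := hx.2
    have hx0 : 0 < x := by
      have : π - δ ≥ 0 := by linarith
      linarith
    have hsin : 0 < Real.sin x := Real.sin_pos_of_pos_of_lt_pi hx0 hx2
    have hsinle : Real.sin x ≤ π - x := by
      have := Real.sin_le (x := π - x) (by linarith)
      rwa [Real.sin_pi_sub] at this
    have hFx : |c| / 2 < |F x| := by
      refine hball ?_ ?_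
      · rw [Real.dist_eq, abs_of_nonpos (by linarith)]
        have h1 : π - x < δ := by linarith
        have h2 : δ ≤ ε := min_le_left _ _
        linarith
      · rw [uIcc_of_le (by linarith)]
        exact ⟨by linarith, by linarith⟩
    have hcpos : 0 < |c| := abs_pos.mpr hc
    have e1 : |(x - π)⁻¹| = (π - x)⁻¹ := by
      rw [abs_inv, abs_sub_comm, abs_of_pos (by linarith : (0:ℝ) < π - x)]
    have e2 : |(Real.sin x)⁻¹ * F x| = (Real.sin x)⁻¹ * |F x| := by
      rw [abs_mul, abs_inv, abs_of_pos hsin]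
    rw [e1, e2, div_mul_eq_mul_div, le_div_iff₀ hcpos]
    calc (π - x)⁻¹ * |c| ≤ (π - x)⁻¹ * (2 * |F x|) := by
          have hpx : (0:ℝ) < π - x := by linarith
          apply mul_le_mul_of_nonneg_left (by linarith) (by positivity)
      _ ≤ (Real.sin x)⁻¹ * (2 * |F x|) := by
          apply mul_le_mul_of_nonneg_right _ (by positivity)
          exact inv_anti₀ hsin hsinle
      _ = 2 * ((Real.sin x)⁻¹ * |F x|) := by ring
  -- integrability of (x - π)⁻¹ on Ioo (π - δ) π
  have hsub : Ioo (π - δ) π ⊆ Ioo (-π) π := fun x hx => ⟨by linarith [hx.1], hx.2⟩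
  have hgint : IntegrableOn (fun x => (x - π)⁻¹) (Ioo (π - δ) π) := by
    apply Integrable.mono
      ((hyint.mono_set hsub).const_mul (2 / |c|))
    · exact ((measurable_id.sub_const π).inv).aestronglyMeasurable
    · rw [ae_restrict_iff' measurableSet_Ioo]
      filter_upwards with x hx
      have := hbound x hx
      rw [Real.norm_eq_abs, Real.norm_eq_abs]
      calc |(x - π)⁻¹| ≤ (2 / |c|) * |(Real.sin x)⁻¹ * F x| := this
        _ ≤ |(2 / |c|) * ((Real.sin x)⁻¹ * F x)| := by
            rw [abs_mul (2 / |c|) ((Real.sin x)⁻¹ * F x)]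
            exact mul_le_mul_of_nonneg_right (le_abs_self _) (abs_nonneg _)
  have hgII : IntervalIntegrable (fun x => (x - π)⁻¹) volume (π - δ) π := by
    rw [intervalIntegrable_iff_integrableOn_Ioo_of_le (by linarith)]
    exact hgint
  rcases intervalIntegrable_sub_inv_iff.mp hgII with h | h
  · linarith
  · exact h (by rw [uIcc_of_le (by linarith)]; exact ⟨by linarith, le_refl _⟩)

/-- If `θ ∈ L²(-π,π)` and `y x = (sin x)⁻¹ ∫₀ˣ θ ∈ L²(-π,π)`, then
`∫_{-π}^0 θ = 0` and `∫_0^π θ = 0`. -/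
theorem stmt_3 (θ : ℝ → ℝ)
    (hθ : MemLp θ 2 (volume.restrict (Ioo (-π) π)))
    (hy : MemLp (fun x => (Real.sin x)⁻¹ * ∫ t in (0:ℝ)..x, θ t) 2
      (volume.restrict (Ioo (-π) π))) :
    (∫ t in (-π)..(0:ℝ), θ t) = 0 ∧ (∫ t in (0:ℝ)..π, θ t) = 0 := by
  have hmp : MeasurePreserving (fun x : ℝ => -x)
      (volume.restrict (Ioo (-π) π)) (volume.restrict (Ioo (-π) π)) := by
    have h := (Measure.measurePreserving_neg (volume : Measure ℝ)).restrict_preimage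
      (measurableSet_Ioo (a := -π) (b := π))
    have hpre : (fun x : ℝ => -x) ⁻¹' Ioo (-π) π = Ioo (-π) π := by
      ext x; simp [neg_lt, lt_neg, and_comm]
    rwa [show (Neg.neg : ℝ → ℝ) = fun x => -x from rfl, hpre] at h
  have hθ' : MemLp (fun t => θ (-t)) 2 (volume.restrict (Ioo (-π) π)) :=
    hθ.comp_measurePreserving hmp
  have hy' : MemLp (fun x => (Real.sin x)⁻¹ * ∫ t in (0:ℝ)..x, θ (-t)) 2
      (volume.restrict (Ioo (-π) π)) := by
    have h := hy.comp_measurePreserving hmp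
    have heq : ((fun x => (Real.sin x)⁻¹ * ∫ t in (0:ℝ)..x, θ t) ∘ fun x : ℝ => -x)
        = fun x => (Real.sin x)⁻¹ * ∫ t in (0:ℝ)..x, θ (-t) := by
      funext x
      simp only [Function.comp_apply, Real.sin_neg]
      rw [intervalIntegral.integral_comp_neg θ, neg_zero,
        intervalIntegral.integral_symm]
      ring
    rwa [heq] at h
  have h1 := key θ hθ hy
  have h2 := key (fun t => θ (-t)) hθ' hy'
  rw [intervalIntegral.integral_comp_neg θ, neg_zero,
    intervalIntegral.integral_symm] at h2
  constructor
  · rw [intervalIntegral.integral_symm]; simpa using h2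
  · exact h1
end

section
/- Fix 0 < ε < 2. Let φ ∈ L²(0,π) and define for x ∈ (0,π): g(x) = (tan(x/2))^{-1/ε} · (sin x)^{-1} · ∫₀ˣ (tan(t/2))^{1/ε} φ(t) dt. Then |g(x)| ≤ x^{-1/2}·β(x) for x near 0, where β(x) → 0 as x → 0⁺; in particular g is integrable near 0 and x ↦ ∫₀ˣ g(τ) dτ is continuous at 0 with |∫₀ˣ g| ≤ γ(x)·x^{1/2} for some γ(x) → 0. -/
open Real MeasureTheory Set Filter

/-- For `0 < ε < 2`, `φ ∈ L²(0,π)` and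
`g x = tan(x/2)^{-1/ε} (sin x)⁻¹ ∫₀ˣ tan(t/2)^{1/ε} φ t dt`, one has
`|g x| ≤ β(x)/√x` with `β → 0` at `0⁺`, `g` is integrable near `0`, and
`|∫₀ˣ g| ≤ γ(x)·√x` with `γ → 0` at `0⁺`. -/
theorem stmt_4 (ε : ℝ) (hε : 0 < ε ∧ ε < 2) (φ : ℝ → ℝ)
    (hφ : MemLp φ 2 (volume.restrict (Ioo (0:ℝ) π)))
    (g : ℝ → ℝ)
    (hg : ∀ x ∈ Ioo (0:ℝ) π,
      g x = (Real.tan (x/2)) ^ (-(1/ε) : ℝ) * (Real.sin x)⁻¹ *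
        ∫ t in (0:ℝ)..x, (Real.tan (t/2)) ^ ((1/ε) : ℝ) * φ t) :
    ∃ β γ : ℝ → ℝ,
      Tendsto β (nhdsWithin 0 (Ioi 0)) (nhds 0) ∧
      Tendsto γ (nhdsWithin 0 (Ioi 0)) (nhds 0) ∧
      ∀ x ∈ Ioo (0:ℝ) π,
        |g x| ≤ β x / Real.sqrt x ∧
        IntegrableOn g (Ioo 0 x) ∧
        |∫ τ in (0:ℝ)..x, g τ| ≤ γ x * Real.sqrt x := by
  obtain ⟨hε0, hε2⟩ := hε
  have hπ3 : (3:ℝ) < π := Real.pi_gt_three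
  have hq : (0:ℝ) < 1/ε := by positivity
  set Φ : ℝ → ℝ := fun t => (Real.tan (t/2)) ^ ((1/ε) : ℝ) * φ t with hΦdef
  set Fsq : ℝ → ℝ := fun y => ∫ t in Ioc (0:ℝ) y, φ t ^ 2 with hFsqdef
  haveI : IsFiniteMeasure (volume.restrict (Ioo (0:ℝ) π)) :=
    ⟨by rw [Measure.restrict_apply_univ, Real.volume_Ioo]; exact ENNReal.ofReal_lt_top⟩
  have hsub : ∀ {x : ℝ}, x < π → Ioc (0:ℝ) x ⊆ Ioo 0 π :=
    fun hx t ht => ⟨ht.1, ht.2.trans_lt hx⟩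
  have hφint : IntegrableOn φ (Ioo 0 π) := hφ.integrable one_le_two
  have hφsq : IntegrableOn (fun t => φ t ^ 2) (Ioo 0 π) := hφ.integrable_sq
  have hFsq_nonneg : ∀ y, 0 ≤ Fsq y :=
    fun y => setIntegral_nonneg measurableSet_Ioc (fun t _ => sq_nonneg _)
  have tanpos : ∀ {y : ℝ}, 0 < y → y < π → 0 < Real.tan (y/2) :=
    fun h1 h2 => Real.tan_pos_of_pos_of_lt_pi_div_two (by linarith) (by linarith)
  -- monotonicity of Fsq
  have hFsq_mono : ∀ {a b : ℝ}, a ≤ b → b < π → Fsq a ≤ Fsq b := by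
    intro a b hab hb
    refine setIntegral_mono_set (hφsq.mono_set (hsub hb)) ?_ ?_
    · exact ae_of_all _ fun t => sq_nonneg _
    · exact Filter.Eventually.of_forall fun t ht => ⟨ht.1, ht.2.trans hab⟩
  -- pointwise bound on Φ
  have hΦbd : ∀ {x : ℝ}, x < π → ∀ t ∈ Ioc (0:ℝ) x,
      ‖Φ t‖ ≤ (Real.tan (x/2)) ^ ((1/ε) : ℝ) * |φ t| := by
    intro x hx2 t ht
    have ht1 : 0 < t := ht.1
    have htπ : t < π := ht.2.trans_lt hx2
    have h1 : 0 < Real.tan (t/2) := tanpos ht1 htπ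
    have h2 : Real.tan (t/2) ≤ Real.tan (x/2) := by
      rcases eq_or_lt_of_le ht.2 with h | h
      · rw [h]
      · exact (Real.tan_lt_tan_of_nonneg_of_lt_pi_div_two (by linarith) (by linarith)
          (by linarith)).le
    have h3 : (Real.tan (t/2)) ^ ((1/ε) : ℝ) ≤ (Real.tan (x/2)) ^ ((1/ε) : ℝ) :=
      Real.rpow_le_rpow h1.le h2 hq.le
    have h4 : 0 ≤ (Real.tan (t/2)) ^ ((1/ε) : ℝ) := Real.rpow_nonneg h1.le _
    calc ‖Φ t‖ = (Real.tan (t/2)) ^ ((1/ε) : ℝ) * |φ t| := by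
          rw [hΦdef, Real.norm_eq_abs, abs_mul, abs_of_nonneg h4]
      _ ≤ (Real.tan (x/2)) ^ ((1/ε) : ℝ) * |φ t| :=
          mul_le_mul_of_nonneg_right h3 (abs_nonneg _)
  -- integrability of Φ on Ioc 0 x
  have hΦint : ∀ {x : ℝ}, 0 < x → x < π → IntegrableOn Φ (Ioc 0 x) := by
    intro x hx1 hx2
    have hcont : ContinuousOn (fun t => (Real.tan (t/2)) ^ ((1/ε) : ℝ)) (Ioc 0 x) := by
      apply ContinuousOn.rpow_const
      · refine Real.continuousOn_tan.comp ((continuous_id.div_const 2).continuousOn) ?_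
        intro t ht
        have : 0 < Real.cos (t/2) := Real.cos_pos_of_mem_Ioo
          ⟨by nlinarith [ht.1, Real.pi_pos], by nlinarith [ht.2, hx2]⟩
        exact this.ne'
      · intro t _; exact Or.inr hq.le
    have haesm : AEStronglyMeasurable Φ (volume.restrict (Ioc 0 x)) := by
      refine AEStronglyMeasurable.mul ?_ ?_
      · exact (hcont.aestronglyMeasurable measurableSet_Ioc)
      · exact hφ.1.mono_measure (Measure.restrict_mono (hsub hx2) le_rfl)
    refine Integrable.mono' (((hφint.mono_set (hsub hx2)).abs).const_mul
      ((Real.tan (x/2)) ^ ((1/ε) : ℝ))) haesm ?_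
    rw [ae_restrict_iff' measurableSet_Ioc]
    exact ae_of_all _ fun t ht => hΦbd hx2 t ht
  -- elementary Cauchy-Schwarz
  have CS : ∀ {x : ℝ}, 0 < x → x < π →
      ∫ t in Ioc (0:ℝ) x, |φ t| ≤ Real.sqrt x * Real.sqrt (Fsq x) := by
    intro x hx1 hx2
    have hφa : IntegrableOn (fun t => |φ t|) (Ioc 0 x) := (hφint.mono_set (hsub hx2)).abs
    have hφ2 : IntegrableOn (fun t => φ t ^ 2) (Ioc 0 x) := hφsq.mono_set (hsub hx2)
    have haux : ∀ a : ℝ, 0 < a →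
        ∫ t in Ioc (0:ℝ) x, |φ t| ≤ a/2 * x + Fsq x / (2*a) := by
      intro a ha
      have h2a : (0:ℝ) < 2*a := by linarith
      have hpt : ∀ t ∈ Ioc (0:ℝ) x, |φ t| ≤ a/2 + φ t ^ 2 / (2*a) := by
        intro t _
        rw [show a/2 + φ t ^ 2 / (2*a) = (a^2 + φ t ^ 2)/(2*a) by field_simp,
          le_div_iff₀ h2a]
        nlinarith [sq_nonneg (a - |φ t|), sq_abs (φ t)]
      have hvol : volume (Ioc (0:ℝ) x) < ⊤ := by simp [Real.volume_Ioc]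
      have hconst : IntegrableOn (fun _ : ℝ => a/2) (Ioc 0 x) :=
        integrableOn_const hvol.ne
      have hint : IntegrableOn (fun t => a/2 + φ t ^ 2 / (2*a)) (Ioc 0 x) :=
        hconst.add (hφ2.div_const _)
      calc ∫ t in Ioc (0:ℝ) x, |φ t| ≤ ∫ t in Ioc (0:ℝ) x, (a/2 + φ t ^ 2 / (2*a)) :=
            setIntegral_mono_on hφa hint measurableSet_Ioc hpt
        _ = a/2 * x + Fsq x / (2*a) := by
            rw [integral_add hconst (hφ2.div_const _), setIntegral_const, integral_div,
              Real.volume_real_Ioc_of_le hx1.le, smul_eq_mul]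
            simp only [hFsqdef]
            ring
    rcases eq_or_lt_of_le (hFsq_nonneg x) with hF | hF
    · rw [← hF, Real.sqrt_zero, mul_zero]
      by_contra hcon
      push_neg at hcon
      set I := ∫ t in Ioc (0:ℝ) x, |φ t| with hI
      have h1 := haux (I/x) (div_pos hcon hx1)
      rw [← hF] at h1
      have : I/x/2*x = I/2 := by field_simp
      rw [this] at h1
      simp at h1
      linarith
    · have hsx : 0 < Real.sqrt x := Real.sqrt_pos.2 hx1
      have hsF : 0 < Real.sqrt (Fsq x) := Real.sqrt_pos.2 hF
      have ex : Real.sqrt x * Real.sqrt x = x := Real.mul_self_sqrt hx1.le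
      have eF : Real.sqrt (Fsq x) * Real.sqrt (Fsq x) = Fsq x := Real.mul_self_sqrt hF.le
      have h1 := haux (Real.sqrt (Fsq x) / Real.sqrt x) (div_pos hsF hsx)
      calc ∫ t in Ioc (0:ℝ) x, |φ t| ≤ Real.sqrt (Fsq x) / Real.sqrt x / 2 * x
            + Fsq x / (2 * (Real.sqrt (Fsq x) / Real.sqrt x)) := h1
        _ = Real.sqrt x * Real.sqrt (Fsq x) := by
            have gen : ∀ s f : ℝ, 0 < s → 0 < f →
                f/s/2*(s*s) + f*f/(2*(f/s)) = s*f := by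
              intro s f hs hf; field_simp; ring
            have := gen (Real.sqrt x) (Real.sqrt (Fsq x)) hsx hsF
            rw [ex, eF] at this
            exact this
  -- key pointwise bound on g
  have key : ∀ x ∈ Ioo (0:ℝ) π,
      |g x| ≤ Real.sqrt x * Real.sqrt (Fsq x) / Real.sin x := by
    intro x hx
    obtain ⟨hx1, hx2⟩ := hx
    have hsin : 0 < Real.sin x := Real.sin_pos_of_pos_of_lt_pi hx1 hx2
    have htan : 0 < Real.tan (x/2) := tanpos hx1 hx2
    set T : ℝ := (Real.tan (x/2)) ^ ((1/ε) : ℝ) with hT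
    have hTpos : 0 < T := Real.rpow_pos_of_pos htan _
    have hJ : |∫ t in (0:ℝ)..x, Φ t| ≤ T * (Real.sqrt x * Real.sqrt (Fsq x)) := by
      rw [intervalIntegral.integral_of_le hx1.le]
      calc |∫ t in Ioc (0:ℝ) x, Φ t| ≤ ∫ t in Ioc (0:ℝ) x, ‖Φ t‖ := by
            simpa [Real.norm_eq_abs] using norm_integral_le_integral_norm (μ := volume.restrict (Ioc (0:ℝ) x)) Φ
        _ ≤ ∫ t in Ioc (0:ℝ) x, T * |φ t| := by
            refine setIntegral_mono_on ((hΦint hx1 hx2).norm) ?_ measurableSet_Ioc ?_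
            · exact ((hφint.mono_set (hsub hx2)).abs).const_mul T
            · exact fun t ht => hΦbd hx2 t ht
        _ = T * ∫ t in Ioc (0:ℝ) x, |φ t| := by rw [integral_const_mul]
        _ ≤ T * (Real.sqrt x * Real.sqrt (Fsq x)) :=
            mul_le_mul_of_nonneg_left (CS hx1 hx2) hTpos.le
    rw [hg x ⟨hx1, hx2⟩]
    have hneg : (Real.tan (x/2)) ^ (-(1/ε) : ℝ) = T⁻¹ := by
      rw [hT, Real.rpow_neg htan.le]
    rw [hneg, abs_mul, abs_mul, abs_of_pos (inv_pos.2 hTpos), abs_of_pos (inv_pos.2 hsin)]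
    calc T⁻¹ * (Real.sin x)⁻¹ * |∫ t in (0:ℝ)..x, Φ t|
        ≤ T⁻¹ * (Real.sin x)⁻¹ * (T * (Real.sqrt x * Real.sqrt (Fsq x))) := by
          exact mul_le_mul_of_nonneg_left hJ (by positivity)
      _ = Real.sqrt x * Real.sqrt (Fsq x) / Real.sin x := by
          field_simp
  -- the tendsto of Fsq and sqrt Fsq
  have hFto : Tendsto Fsq (nhdsWithin 0 (Ioi 0)) (nhds 0) := by
    have hint : IntegrableOn (fun t => φ t ^ 2) (Icc (0:ℝ) 1) := by
      rw [integrableOn_Icc_iff_integrableOn_Ioc]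
      exact hφsq.mono_set (hsub (by linarith))
    have hc : ContinuousOn Fsq (Icc (0:ℝ) 1) := intervalIntegral.continuousOn_primitive hint
    have h0 : Fsq 0 = 0 := by rw [hFsqdef]; simp
    have h1 := (hc 0 ⟨le_refl 0, zero_le_one⟩).tendsto
    rw [h0] at h1
    refine h1.mono_left ?_
    rw [← nhdsWithin_Ioc_eq_nhdsGT (zero_lt_one (α := ℝ))]
    exact nhdsWithin_mono _ Ioc_subset_Icc_self
  have hsF : Tendsto (fun x => Real.sqrt (Fsq x)) (nhdsWithin 0 (Ioi 0)) (nhds 0) := by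
    have := (Real.continuous_sqrt.tendsto 0).comp hFto
    simpa [Function.comp_def] using this
  -- definitions of β and γ
  refine ⟨fun x => x * Real.sqrt (Fsq x) / Real.sin x,
    fun x => 2 * (x * Real.sqrt (Fsq x) / Real.sin x), ?_, ?_, ?_⟩
  · -- tendsto β
    apply squeeze_zero' (g := fun x => (π/2) * Real.sqrt (Fsq x))
    · filter_upwards [Ioo_mem_nhdsGT_of_mem (show (0:ℝ) ∈ Ico 0 1 by simp)] with x hx
      have hsin : 0 < Real.sin x := Real.sin_pos_of_pos_of_lt_pi hx.1 (by linarith [hx.2])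
      exact div_nonneg (mul_nonneg hx.1.le (Real.sqrt_nonneg _)) hsin.le
    · filter_upwards [Ioo_mem_nhdsGT_of_mem (show (0:ℝ) ∈ Ico 0 1 by simp)] with x hx
      have hx1 := hx.1
      have hsin : 2/π * x ≤ Real.sin x := Real.mul_le_sin hx1.le (by nlinarith [hx.2])
      have hsin0 : 0 < Real.sin x := lt_of_lt_of_le (by positivity) hsin
      rw [div_le_iff₀ hsin0]
      have hπ0 : (0:ℝ) < π := by linarith
      have h2 : (π/2) * Real.sqrt (Fsq x) * (2/π * x) = x * Real.sqrt (Fsq x) := by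
        field_simp
      calc x * Real.sqrt (Fsq x) = (π/2) * Real.sqrt (Fsq x) * (2/π * x) := h2.symm
        _ ≤ (π/2) * Real.sqrt (Fsq x) * Real.sin x := by
            refine mul_le_mul_of_nonneg_left hsin (by positivity)
    · simpa using hsF.const_mul (π/2)
  · -- tendsto γ
    have : Tendsto (fun x => x * Real.sqrt (Fsq x) / Real.sin x) (nhdsWithin 0 (Ioi 0)) (nhds 0) := by
      apply squeeze_zero' (g := fun x => (π/2) * Real.sqrt (Fsq x))
      · filter_upwards [Ioo_mem_nhdsGT_of_mem (show (0:ℝ) ∈ Ico 0 1 by simp)] with x hx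
        have hsin : 0 < Real.sin x := Real.sin_pos_of_pos_of_lt_pi hx.1 (by linarith [hx.2])
        exact div_nonneg (mul_nonneg hx.1.le (Real.sqrt_nonneg _)) hsin.le
      · filter_upwards [Ioo_mem_nhdsGT_of_mem (show (0:ℝ) ∈ Ico 0 1 by simp)] with x hx
        have hx1 := hx.1
        have hsin : 2/π * x ≤ Real.sin x := Real.mul_le_sin hx1.le (by nlinarith [hx.2])
        have hsin0 : 0 < Real.sin x := lt_of_lt_of_le (by positivity) hsin
        rw [div_le_iff₀ hsin0]
        have hπ0 : (0:ℝ) < π := by linarith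
        have h2 : (π/2) * Real.sqrt (Fsq x) * (2/π * x) = x * Real.sqrt (Fsq x) := by
          field_simp
        calc x * Real.sqrt (Fsq x) = (π/2) * Real.sqrt (Fsq x) * (2/π * x) := h2.symm
          _ ≤ (π/2) * Real.sqrt (Fsq x) * Real.sin x := by
              refine mul_le_mul_of_nonneg_left hsin (by positivity)
      · simpa using hsF.const_mul (π/2)
    simpa using this.const_mul 2
  -- the three properties
  intro x hx
  obtain ⟨hx1, hx2⟩ := hx
  have hsinx : 0 < Real.sin x := Real.sin_pos_of_pos_of_lt_pi hx1 hx2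
  have hsqx : 0 < Real.sqrt x := Real.sqrt_pos.2 hx1
  have exx : Real.sqrt x * Real.sqrt x = x := Real.mul_self_sqrt hx1.le
  set C : ℝ := x * Real.sqrt (Fsq x) / Real.sin x with hC
  have hC0 : 0 ≤ C := by positivity
  -- pointwise bound on g over Ioc 0 x
  have bd : ∀ τ ∈ Ioc (0:ℝ) x, |g τ| ≤ C * (Real.sqrt τ)⁻¹ := by
    intro τ hτ
    have hτ1 : 0 < τ := hτ.1
    have hτπ : τ < π := hτ.2.trans_lt hx2
    have hsτ : 0 < Real.sqrt τ := Real.sqrt_pos.2 hτ1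
    have eττ : Real.sqrt τ * Real.sqrt τ = τ := Real.mul_self_sqrt hτ1.le
    have hsinτ : 0 < Real.sin τ := Real.sin_pos_of_pos_of_lt_pi hτ1 hτπ
    have hconc : τ/x * Real.sin x ≤ Real.sin τ := by
      have hmem0 : (0:ℝ) ∈ Icc (0:ℝ) π := ⟨le_refl 0, by linarith⟩
      have hmemx : x ∈ Icc (0:ℝ) π := ⟨hx1.le, hx2.le⟩
      have ha : (0:ℝ) ≤ 1 - τ/x := by
        rw [sub_nonneg]; exact div_le_one_of_le₀ hτ.2 hx1.le
      have hb : (0:ℝ) ≤ τ/x := by positivity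
      have hab : (1 - τ/x) + τ/x = 1 := by ring
      have := strictConcaveOn_sin_Icc.concaveOn.2 hmem0 hmemx ha hb hab
      simp only [smul_eq_mul, mul_zero, Real.sin_zero, zero_add] at this
      rwa [div_mul_cancel₀ _ hx1.ne'] at this
    have hFsqτ : Real.sqrt (Fsq τ) ≤ Real.sqrt (Fsq x) :=
      Real.sqrt_le_sqrt (hFsq_mono hτ.2 hx2)
    have hd : 0 < τ/x * Real.sin x := by positivity
    calc |g τ| ≤ Real.sqrt τ * Real.sqrt (Fsq τ) / Real.sin τ := key τ ⟨hτ1, hτπ⟩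
      _ ≤ Real.sqrt τ * Real.sqrt (Fsq x) / (τ/x * Real.sin x) := by
          refine div_le_div₀ (by positivity) ?_ hd hconc
          exact mul_le_mul_of_nonneg_left hFsqτ hsτ.le
      _ = C * (Real.sqrt τ)⁻¹ := by
          rw [hC]
          field_simp
          linear_combination (Real.sqrt (Fsq x)) * eττ
  -- majorant integrability: C * τ^(-1/2)
  have hM : IntegrableOn (fun τ : ℝ => C * τ ^ (-(1/2) : ℝ)) (Ioc 0 x) := by
    have h1 : IntervalIntegrable (fun τ : ℝ => τ ^ (-(1/2) : ℝ)) volume 0 x :=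
      intervalIntegral.intervalIntegrable_rpow' (by norm_num)
    rw [intervalIntegrable_iff_integrableOn_Ioc_of_le hx1.le] at h1
    exact h1.const_mul C
  have hbd' : ∀ τ ∈ Ioc (0:ℝ) x, ‖g τ‖ ≤ C * τ ^ (-(1/2) : ℝ) := by
    intro τ hτ
    have hτ1 : 0 < τ := hτ.1
    have : τ ^ (-(1/2) : ℝ) = (Real.sqrt τ)⁻¹ := by
      rw [Real.rpow_neg hτ1.le, Real.sqrt_eq_rpow]
    rw [Real.norm_eq_abs, this]
    exact bd τ hτ
  -- measurability of g on Ioo 0 x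
  have haesm : AEStronglyMeasurable g (volume.restrict (Ioo 0 x)) := by
    have hΦIcc : IntegrableOn Φ (Icc 0 x) := by
      rw [integrableOn_Icc_iff_integrableOn_Ioc]
      exact hΦint hx1 hx2
    have hψ : ContinuousOn (fun y => ∫ t in Ioc (0:ℝ) y, Φ t) (Icc 0 x) :=
      intervalIntegral.continuousOn_primitive hΦIcc
    have hfac : ContinuousOn (fun y => (Real.tan (y/2)) ^ (-(1/ε) : ℝ) * (Real.sin y)⁻¹)
        (Ioo 0 x) := by
      refine ContinuousOn.mul ?_ ?_
      · apply ContinuousOn.rpow_const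
        · refine Real.continuousOn_tan.comp ((continuous_id.div_const 2).continuousOn) ?_
          intro t ht
          have : 0 < Real.cos (t/2) := Real.cos_pos_of_mem_Ioo
            ⟨by nlinarith [ht.1, Real.pi_pos], by nlinarith [ht.2, hx2]⟩
          exact this.ne'
        · intro t ht
          exact Or.inl (tanpos ht.1 (ht.2.trans hx2)).ne'
      · exact (Real.continuous_sin.continuousOn).inv₀
          (fun t ht => (Real.sin_pos_of_pos_of_lt_pi ht.1 (ht.2.trans hx2)).ne')
    have hG : AEStronglyMeasurable
        (fun y => (Real.tan (y/2)) ^ (-(1/ε) : ℝ) * (Real.sin y)⁻¹ * ∫ t in Ioc (0:ℝ) y, Φ t)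
        (volume.restrict (Ioo 0 x)) := by
      exact ((hfac.mul (hψ.mono Ioo_subset_Icc_self)).aestronglyMeasurable measurableSet_Ioo)
    refine hG.congr ?_
    rw [Filter.EventuallyEq, ae_restrict_iff' measurableSet_Ioo]
    refine ae_of_all _ fun τ hτ => ?_
    rw [hg τ ⟨hτ.1, hτ.2.trans hx2⟩, intervalIntegral.integral_of_le hτ.1.le]
  refine ⟨?_, ?_, ?_⟩
  · -- |g x| ≤ β x / √x
    have h1 := key x ⟨hx1, hx2⟩
    have h2 : x * Real.sqrt (Fsq x) / Real.sin x / Real.sqrt x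
        = Real.sqrt x * Real.sqrt (Fsq x) / Real.sin x := by
      field_simp
      linear_combination (-(Real.sqrt (Fsq x))) * exx
    rw [h2]
    exact h1
  · -- integrability
    refine Integrable.mono' (hM.mono_set Ioo_subset_Ioc_self) haesm ?_
    rw [ae_restrict_iff' measurableSet_Ioo]
    exact ae_of_all _ fun τ hτ => hbd' τ ⟨hτ.1, hτ.2.le⟩
  · -- integral bound
    rw [intervalIntegral.integral_of_le hx1.le]
    have h1 : ‖∫ τ in Ioc (0:ℝ) x, g τ‖ ≤ ∫ τ in Ioc (0:ℝ) x, C * τ ^ (-(1/2) : ℝ) := by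
      refine norm_integral_le_of_norm_le hM ?_
      rw [ae_restrict_iff' measurableSet_Ioc]
      exact ae_of_all _ fun τ hτ => hbd' τ hτ
    have h2 : ∫ τ in Ioc (0:ℝ) x, C * τ ^ (-(1/2) : ℝ) = C * (2 * Real.sqrt x) := by
      rw [integral_const_mul]
      congr 1
      rw [← intervalIntegral.integral_of_le hx1.le,
        integral_rpow (Or.inl (by norm_num))]
      rw [Real.sqrt_eq_rpow]
      rw [Real.zero_rpow (by norm_num)]
      norm_num
      ring
    rw [Real.norm_eq_abs] at h1
    calc |∫ τ in Ioc (0:ℝ) x, g τ| ≤ C * (2 * Real.sqrt x) := h2 ▸ h1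
      _ = 2 * (x * Real.sqrt (Fsq x) / Real.sin x) * Real.sqrt x := by rw [hC]; ring
end

section
/- Fix 0 < ε < 2. Let B be the operator on L²(-π,π) defined by (By)(x) = sin(x)·y'(x) with natural domain {y ∈ L² : y locally absolutely continuous on each of (-π,0) and (0,π), sin·y' ∈ L²}, and A the operator (Ay)(x) = (sin(x)·y(x))' with natural domain. Then D(A) = D(B) and A* = -B. -/
open Real MeasureTheory Set Filter Topology intervalIntegral

private lemma sin_zero_set_null : volume {x : ℝ | Real.sin x = 0} = 0 := by
  have hsub : {x : ℝ | Real.sin x = 0} ⊆ Set.range (fun n : ℤ => (n : ℝ) * π) := by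
    intro x hx
    rcases Real.sin_eq_zero_iff.1 hx with ⟨n, hn⟩
    exact ⟨n, hn⟩
  exact measure_mono_null hsub ((Set.countable_range _).measure_zero _)

private lemma memL1_mul {f g : ℝ → ℝ} {μ : Measure ℝ}
    (hf : MemLp f 2 μ) (hg : MemLp g 2 μ) : Integrable (fun x => f x * g x) μ := by
  rw [← memLp_one_iff_integrable]
  have h := hg.smul (φ := f) (p := 2) (r := 1) hf (hpqr := ⟨by
    rw [inv_one, ← one_div, ENNReal.add_halves]⟩)
  exact h

private lemma sin_ne_zero_of_mem {x : ℝ} (hx : x ∈ Ioo (-π) π) (hx0 : x ≠ 0) :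
    Real.sin x ≠ 0 := by
  rcases lt_or_gt_of_ne hx0 with h | h
  · have : 0 < Real.sin (-x) := Real.sin_pos_of_pos_of_lt_pi (by linarith) (by linarith [hx.1])
    rw [Real.sin_neg] at this; linarith
  · exact ne_of_gt (Real.sin_pos_of_pos_of_lt_pi h hx.2)

private lemma limit_zero_right {a b L : ℝ} (hab : a < b) {f : ℝ → ℝ}
    (hf : IntegrableOn f (Ioo a b))
    (hsin : ∀ x ∈ Ioo a b, |Real.sin x| ≤ x - a)
    (hL : Tendsto (fun x => Real.sin x * f x) (𝓝[>] a) (𝓝 L)) : L = 0 := by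
  by_contra h0
  have hLpos : 0 < |L| := abs_pos.2 h0
  have hev : ∀ᶠ x in 𝓝[>] a, |L| / 2 ≤ |Real.sin x * f x| :=
    hL.abs.eventually_const_le (by linarith)
  have hev2 : Ioo a b ∈ 𝓝[>] a := Ioo_mem_nhdsGT_of_mem ⟨le_refl a, hab⟩
  obtain ⟨t, ht, hsub⟩ := mem_nhdsGT_iff_exists_Ioo_subset.1 (hev.and hev2)
  have htm : a < min t b := lt_min ht hab
  have key : ∀ x ∈ Ioo a (min t b), (x - a)⁻¹ ≤ 2 / |L| * |f x| := by
    intro x hx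
    have hx' : x ∈ Ioo a t := ⟨hx.1, lt_of_lt_of_le hx.2 (min_le_left _ _)⟩
    obtain ⟨h1, h2⟩ := hsub hx'
    have hxa : 0 < x - a := by simp [hx.1, sub_pos]
    have hb1 : |L| / 2 ≤ (x - a) * |f x| := by
      calc |L| / 2 ≤ |Real.sin x * f x| := h1
        _ = |Real.sin x| * |f x| := abs_mul _ _
        _ ≤ (x - a) * |f x| := mul_le_mul_of_nonneg_right (hsin x h2) (abs_nonneg _)
    rw [← one_div, div_le_iff₀ hxa]
    have e1 : (2 / |L|) * (|L| / 2) = 1 := by field_simp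
    have h2' := mul_le_mul_of_nonneg_left hb1 (by positivity : (0:ℝ) ≤ 2 / |L|)
    nlinarith [h2']
  have hint : IntegrableOn (fun x => (x - a)⁻¹) (Ioo a (min t b)) volume := by
    refine Integrable.mono'
      (((hf.mono (Ioo_subset_Ioo le_rfl (min_le_right t b)) le_rfl).abs).const_mul (2 / |L|))
      ?_ ?_
    · exact ((measurable_id.sub_const a).inv).aestronglyMeasurable
    · rw [ae_restrict_iff' measurableSet_Ioo]
      filter_upwards with x hx
      have hxa : 0 < x - a := by simp [hx.1, sub_pos]
      rw [Real.norm_eq_abs, abs_of_pos (inv_pos.2 hxa)]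
      exact key x hx
  have : IntervalIntegrable (fun x => (x - a)⁻¹) volume a (min t b) :=
    (intervalIntegrable_iff_integrableOn_Ioo_of_le htm.le).2 hint
  rw [intervalIntegrable_sub_inv_iff] at this
  rcases this with h | h
  · exact absurd h htm.ne
  · exact h (left_mem_uIcc)

private lemma limit_zero_left {a b L : ℝ} (hab : a < b) {f : ℝ → ℝ}
    (hf : IntegrableOn f (Ioo a b))
    (hsin : ∀ x ∈ Ioo a b, |Real.sin x| ≤ b - x)
    (hL : Tendsto (fun x => Real.sin x * f x) (𝓝[<] b) (𝓝 L)) : L = 0 := by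
  by_contra h0
  have hLpos : 0 < |L| := abs_pos.2 h0
  have hev : ∀ᶠ x in 𝓝[<] b, |L| / 2 ≤ |Real.sin x * f x| :=
    hL.abs.eventually_const_le (by linarith)
  have hev2 : Ioo a b ∈ 𝓝[<] b := Ioo_mem_nhdsLT_of_mem ⟨hab, le_refl b⟩
  obtain ⟨t, ht, hsub⟩ := mem_nhdsLT_iff_exists_Ioo_subset.1 (hev.and hev2)
  have htm : max t a < b := max_lt ht hab
  have key : ∀ x ∈ Ioo (max t a) b, (b - x)⁻¹ ≤ 2 / |L| * |f x| := by
    intro x hx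
    have hx' : x ∈ Ioo t b := ⟨lt_of_le_of_lt (le_max_left _ _) hx.1, hx.2⟩
    obtain ⟨h1, h2⟩ := hsub hx'
    have hxa : 0 < b - x := by simp [hx.2, sub_pos]
    have hb1 : |L| / 2 ≤ (b - x) * |f x| := by
      calc |L| / 2 ≤ |Real.sin x * f x| := h1
        _ = |Real.sin x| * |f x| := abs_mul _ _
        _ ≤ (b - x) * |f x| := mul_le_mul_of_nonneg_right (hsin x h2) (abs_nonneg _)
    rw [← one_div, div_le_iff₀ hxa]
    have e1 : (2 / |L|) * (|L| / 2) = 1 := by field_simp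
    have h2' := mul_le_mul_of_nonneg_left hb1 (by positivity : (0:ℝ) ≤ 2 / |L|)
    nlinarith [h2']
  have hint : IntegrableOn (fun x => (b - x)⁻¹) (Ioo (max t a) b) volume := by
    refine Integrable.mono'
      (((hf.mono (Ioo_subset_Ioo (le_max_right t a) le_rfl) le_rfl).abs).const_mul (2 / |L|))
      ?_ ?_
    · exact ((measurable_const.sub measurable_id).inv).aestronglyMeasurable
    · rw [ae_restrict_iff' measurableSet_Ioo]
      filter_upwards with x hx
      have hxa : 0 < b - x := by simp [hx.2, sub_pos]
      rw [Real.norm_eq_abs, abs_of_pos (inv_pos.2 hxa)]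
      exact key x hx
  have hii : IntervalIntegrable (fun x => (b - x)⁻¹) volume (max t a) b :=
    (intervalIntegrable_iff_integrableOn_Ioo_of_le htm.le).2 hint
  have hneg : IntervalIntegrable (fun x => (x - b)⁻¹) volume (max t a) b := by
    have := hii.neg
    apply this.congr
    intro x _
    rw [Pi.neg_apply, ← inv_neg, neg_sub]
  rw [intervalIntegrable_sub_inv_iff] at hneg
  rcases hneg with h | h
  · exact absurd h htm.ne
  · exact h (right_mem_uIcc)

private lemma ftc_open {c d : ℝ} (hcd : c < d) {F φ : ℝ → ℝ}
    (hF : ∀ x ∈ Ioo c d, HasDerivAt F (φ x) x)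
    (hφ : IntegrableOn φ (Ioo c d)) :
    ∃ Lc Ld : ℝ, Tendsto F (𝓝[>] c) (𝓝 Lc) ∧ Tendsto F (𝓝[<] d) (𝓝 Ld) ∧
      ∫ x in c..d, φ x = Ld - Lc := by
  set m : ℝ := (c + d) / 2 with hm
  have hcm : c < m := by simp [hm]; linarith
  have hmd : m < d := by simp [hm]; linarith
  have hii : ∀ a b : ℝ, c ≤ a → a ≤ b → b ≤ d → IntervalIntegrable φ volume a b := by
    intro a b ha hab hb
    rw [intervalIntegrable_iff_integrableOn_Ioo_of_le hab]
    exact hφ.mono (Ioo_subset_Ioo (by linarith) (by linarith) |>.trans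
      (Ioo_subset_Ioo ha hb)) le_rfl
  have hftc : ∀ a b : ℝ, c < a → a ≤ b → b < d → ∫ x in a..b, φ x = F b - F a := by
    intro a b ha hab hb
    apply integral_eq_sub_of_hasDerivAt
    · intro x hx
      rw [uIcc_of_le hab] at hx
      exact hF x ⟨lt_of_lt_of_le ha hx.1, lt_of_le_of_lt hx.2 hb⟩
    · exact hii a b ha.le hab hb.le
  have hIcm : IntegrableOn φ (uIcc c m) volume := by
    rw [uIcc_of_le hcm.le, integrableOn_Icc_iff_integrableOn_Ioo]
    exact hφ.mono (Ioo_subset_Ioo le_rfl hmd.le) le_rfl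
  have hcontL := (continuousOn_primitive_interval_left hIcm) c left_mem_uIcc
  have htendL : Tendsto (fun a => ∫ x in a..m, φ x) (𝓝[>] c) (𝓝 (∫ x in c..m, φ x)) := by
    have h1 : Tendsto (fun a => ∫ x in a..m, φ x) (𝓝[uIcc c m] c) (𝓝 (∫ x in c..m, φ x)) :=
      hcontL.tendsto
    refine h1.mono_left ?_
    rw [← nhdsWithin_Ioo_eq_nhdsGT hcm]
    exact nhdsWithin_mono _ (by rw [uIcc_of_le hcm.le]; exact Ioo_subset_Icc_self)
  have hFL : Tendsto F (𝓝[>] c) (𝓝 (F m - ∫ x in c..m, φ x)) := by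
    have heq : ∀ᶠ a in 𝓝[>] c, F m - ∫ x in a..m, φ x = F a := by
      filter_upwards [Ioo_mem_nhdsGT_of_mem ⟨le_refl c, hcm⟩] with a ha
      rw [hftc a m ha.1 ha.2.le hmd]
      ring
    exact Tendsto.congr' heq ((tendsto_const_nhds.sub htendL))
  have hImd : IntegrableOn φ (uIcc m d) volume := by
    rw [uIcc_of_le hmd.le, integrableOn_Icc_iff_integrableOn_Ioo]
    exact hφ.mono (Ioo_subset_Ioo hcm.le le_rfl) le_rfl
  have hcontR := (continuousOn_primitive_interval hImd) d right_mem_uIcc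
  have htendR : Tendsto (fun b => ∫ x in m..b, φ x) (𝓝[<] d) (𝓝 (∫ x in m..d, φ x)) := by
    have h1 : Tendsto (fun b => ∫ x in m..b, φ x) (𝓝[uIcc m d] d) (𝓝 (∫ x in m..d, φ x)) :=
      hcontR.tendsto
    refine h1.mono_left ?_
    rw [← nhdsWithin_Ioo_eq_nhdsLT hmd]
    exact nhdsWithin_mono _ (by rw [uIcc_of_le hmd.le]; exact Ioo_subset_Icc_self)
  have hFR : Tendsto F (𝓝[<] d) (𝓝 (F m + ∫ x in m..d, φ x)) := by
    have heq : ∀ᶠ b in 𝓝[<] d, F m + ∫ x in m..b, φ x = F b := by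
      filter_upwards [Ioo_mem_nhdsLT_of_mem ⟨hmd, le_refl d⟩] with b hb
      rw [hftc m b hcm hb.1.le hb.2]
      ring
    exact Tendsto.congr' heq ((tendsto_const_nhds.add htendR))
  refine ⟨_, _, hFL, hFR, ?_⟩
  rw [← integral_add_adjacent_intervals (hii c m le_rfl hcm.le hmd.le)
    (hii m d hcm.le hmd.le le_rfl)]
  ring

private lemma half_integral (c d : ℝ) (hcd : c < d) (hsub : Ioo c d ⊆ Ioo (-π) π)
    (h0 : (0:ℝ) ∉ Ioo c d)
    (hsinR : ∀ x ∈ Ioo c d, |Real.sin x| ≤ x - c)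
    (hsinL : ∀ x ∈ Ioo c d, |Real.sin x| ≤ d - x)
    (y z h g : ℝ → ℝ)
    (hy : MemLp y 2 (volume.restrict (Ioo (-π) π)))
    (hz : MemLp z 2 (volume.restrict (Ioo (-π) π)))
    (hhd : ∀ x ∈ Ioo (-π) π, x ≠ 0 →
      HasDerivAt (fun t => Real.sin t * y t) (h x) x)
    (hh : MemLp h 2 (volume.restrict (Ioo (-π) π)))
    (hgd : ∀ x ∈ Ioo (-π) π, x ≠ 0 → HasDerivAt z (g x) x)
    (hsg : MemLp (fun x => Real.sin x * g x) 2 (volume.restrict (Ioo (-π) π))) :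
    ∫ x in c..d, (h x * z x + y x * (Real.sin x * g x)) = 0 := by
  set F : ℝ → ℝ := fun x => Real.sin x * (y x * z x) with hFdef
  set φ : ℝ → ℝ := fun x => h x * z x + y x * (Real.sin x * g x) with hφdef
  have hφint : IntegrableOn φ (Ioo (-π) π) volume :=
    (memL1_mul hh hz).add (memL1_mul hy hsg)
  have hφint' : IntegrableOn φ (Ioo c d) volume := hφint.mono hsub le_rfl
  have hyzint0 : IntegrableOn (fun x => y x * z x) (Ioo (-π) π) volume := memL1_mul hy hz
  have hyzint : IntegrableOn (fun x => y x * z x) (Ioo c d) volume :=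
    hyzint0.mono hsub le_rfl
  have hF : ∀ x ∈ Ioo c d, HasDerivAt F (φ x) x := by
    intro x hx
    have hxm := hsub hx
    have hx0 : x ≠ 0 := fun hx0 => h0 (hx0 ▸ hx)
    have d1 := hhd x hxm hx0
    have d2 := hgd x hxm hx0
    have hmul : HasDerivAt (fun t => (Real.sin t * y t) * z t)
        (h x * z x + (Real.sin x * y x) * g x) x := d1.mul d2
    have hFeq : F = fun t => (Real.sin t * y t) * z t := by funext t; simp [hFdef]; ring
    rw [hFeq]
    convert hmul using 1
    simp [hφdef]; ring
  obtain ⟨Lc, Ld, hLc, hLd, hint⟩ := ftc_open hcd hF hφint'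
  have hLc0 : Lc = 0 := limit_zero_right hcd hyzint hsinR hLc
  have hLd0 : Ld = 0 := limit_zero_left hcd hyzint hsinL hLd
  rw [hint, hLc0, hLd0, sub_zero]

/-- For `0 < ε < 2`, the operators `A : y ↦ (sin·y)'` and
`B : y ↦ sin·y'` on `L²(-π,π)` (with natural domains, derivatives away from the
zeros of `sin`) have equal domains, and `A* = -B`, expressed by the
integration-by-parts identity `∫ (sin·y)'·z = -∫ y·(sin·z')`. -/
theorem stmt_12 (ε : ℝ) (hε : 0 < ε ∧ ε < 2) :
    (∀ y : ℝ → ℝ,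
      (MemLp y 2 (volume.restrict (Ioo (-π) π)) ∧
        ∃ h : ℝ → ℝ,
          (∀ x ∈ Ioo (-π) π, x ≠ 0 →
            HasDerivAt (fun t => Real.sin t * y t) (h x) x) ∧
          MemLp h 2 (volume.restrict (Ioo (-π) π))) ↔
      (MemLp y 2 (volume.restrict (Ioo (-π) π)) ∧
        ∃ g : ℝ → ℝ,
          (∀ x ∈ Ioo (-π) π, x ≠ 0 → HasDerivAt y (g x) x) ∧
          MemLp (fun x => Real.sin x * g x) 2 (volume.restrict (Ioo (-π) π)))) ∧
    (∀ y z h g : ℝ → ℝ,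
      MemLp y 2 (volume.restrict (Ioo (-π) π)) →
      MemLp z 2 (volume.restrict (Ioo (-π) π)) →
      (∀ x ∈ Ioo (-π) π, x ≠ 0 →
        HasDerivAt (fun t => Real.sin t * y t) (h x) x) →
      MemLp h 2 (volume.restrict (Ioo (-π) π)) →
      (∀ x ∈ Ioo (-π) π, x ≠ 0 → HasDerivAt z (g x) x) →
      MemLp (fun x => Real.sin x * g x) 2 (volume.restrict (Ioo (-π) π)) →
      (∫ x in (-π)..π, h x * z x) =
        -∫ x in (-π)..π, y x * (Real.sin x * g x)) := by
  have hπ : (0:ℝ) < π := pi_pos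
  have hcos : MemLp Real.cos ⊤ (volume.restrict (Ioo (-π) π)) :=
    memLp_top_of_bound Real.continuous_cos.aestronglyMeasurable 1
      (ae_of_all _ fun x => by rw [Real.norm_eq_abs]; exact Real.abs_cos_le_one x)
  constructor
  · -- Part 1: equality of domains
    intro y
    constructor
    · rintro ⟨hy, h, hd, hh⟩
      refine ⟨hy, fun x => (h x - Real.cos x * y x) / Real.sin x, ?_, ?_⟩
      · intro x hx hx0
        have hs : Real.sin x ≠ 0 := sin_ne_zero_of_mem hx hx0
        have hev : (fun t => (Real.sin t * y t) / Real.sin t) =ᶠ[𝓝 x] y := by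
          filter_upwards [Real.continuous_sin.continuousAt.eventually_ne hs] with t ht
          field_simp
        have hq := (hd x hx hx0).div (Real.hasDerivAt_sin x) hs
        have hy' : HasDerivAt y ((h x * Real.sin x - (Real.sin x * y x) * Real.cos x) /
            Real.sin x ^ 2) x := hq.congr_of_eventuallyEq hev.symm
        convert hy' using 1
        field_simp
      · have hcy : MemLp (fun x => Real.cos x * y x) 2 (volume.restrict (Ioo (-π) π)) := by
          have hc := MemLp.smul (p := ⊤) (q := 2) (r := 2) (φ := Real.cos) (f := y) hy hcos
          exact hc
        have hae : (fun x => Real.sin x * ((h x - Real.cos x * y x) / Real.sin x))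
            =ᵐ[volume.restrict (Ioo (-π) π)] (fun x => h x - Real.cos x * y x) := by
          apply ae_restrict_of_ae
          have hns : ∀ᵐ x ∂(volume : Measure ℝ), Real.sin x ≠ 0 := by
            rw [ae_iff]
            simpa using sin_zero_set_null
          filter_upwards [hns] with x hx
          field_simp
        exact (hh.sub hcy).ae_eq hae.symm
    · rintro ⟨hy, g, hd, hg⟩
      refine ⟨hy, fun x => Real.cos x * y x + Real.sin x * g x, ?_, ?_⟩
      · intro x hx hx0
        exact (Real.hasDerivAt_sin x).mul (hd x hx hx0)
      · have hcy : MemLp (fun x => Real.cos x * y x) 2 (volume.restrict (Ioo (-π) π)) := by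
          have hc := MemLp.smul (p := ⊤) (q := 2) (r := 2) (φ := Real.cos) (f := y) hy hcos
          exact hc
        exact hcy.add hg
  · -- Part 2: integration by parts
    intro y z h g hy hz hhd hh hgd hsg
    set φ : ℝ → ℝ := fun x => h x * z x + y x * (Real.sin x * g x) with hφdef
    have hφint : IntegrableOn φ (Ioo (-π) π) volume :=
      (memL1_mul hh hz).add (memL1_mul hy hsg)
    have hiiφ : ∀ a b : ℝ, -π ≤ a → a ≤ b → b ≤ π → IntervalIntegrable φ volume a b := by
      intro a b ha hab hb
      rw [intervalIntegrable_iff_integrableOn_Ioo_of_le hab]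
      exact hφint.mono (Ioo_subset_Ioo ha hb) le_rfl
    have hsub1 : Ioo (-π) 0 ⊆ Ioo (-π) π := Ioo_subset_Ioo le_rfl hπ.le
    have hsub2 : Ioo 0 π ⊆ Ioo (-π) π := Ioo_subset_Ioo (by linarith) le_rfl
    have h1 : ∫ x in (-π)..0, φ x = 0 := by
      apply half_integral (-π) 0 (by linarith) hsub1 (by simp) _ _ y z h g hy hz hhd hh hgd hsg
      · intro x hx
        calc |Real.sin x| = |Real.sin (x + π)| := by rw [Real.sin_add_pi, abs_neg]
          _ ≤ |x + π| := Real.abs_sin_le_abs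
          _ = x - (-π) := by rw [abs_of_pos (by linarith [hx.1] : (0:ℝ) < x + π)]; ring
      · intro x hx
        calc |Real.sin x| ≤ |x| := Real.abs_sin_le_abs
          _ = 0 - x := by rw [abs_of_neg hx.2]; ring
    have h2 : ∫ x in (0:ℝ)..π, φ x = 0 := by
      apply half_integral 0 π hπ hsub2 (by simp) _ _ y z h g hy hz hhd hh hgd hsg
      · intro x hx
        calc |Real.sin x| ≤ |x| := Real.abs_sin_le_abs
          _ = x - 0 := by rw [abs_of_pos hx.1]; ring
      · intro x hx
        calc |Real.sin x| = |Real.sin (π - x)| := by rw [Real.sin_pi_sub]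
          _ ≤ |π - x| := Real.abs_sin_le_abs
          _ = π - x := abs_of_pos (by linarith [hx.2])
    have hsum : ∫ x in (-π)..π, φ x = 0 := by
      rw [← integral_add_adjacent_intervals (hiiφ (-π) 0 le_rfl (by linarith) hπ.le)
        (hiiφ 0 π (by linarith) hπ.le le_rfl), h1, h2, add_zero]
    have hhz : IntervalIntegrable (fun x => h x * z x) volume (-π) π := by
      rw [intervalIntegrable_iff_integrableOn_Ioo_of_le (by linarith)]
      exact memL1_mul hh hz
    have hyg : IntervalIntegrable (fun x => y x * (Real.sin x * g x)) volume (-π) π := by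
      rw [intervalIntegrable_iff_integrableOn_Ioo_of_le (by linarith)]
      exact memL1_mul hy hsg
    have hsplit : ∫ x in (-π)..π, φ x =
        (∫ x in (-π)..π, h x * z x) + ∫ x in (-π)..π, y x * (Real.sin x * g x) :=
      integral_add hhz hyg
    rw [hsplit] at hsum
    linarith
end
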